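/- There exists an integer n₀ such that for all n' ≥ n₀ the following holds: if A is a nonempty downward closed family of subsets of [n'] and k is a positive integer with k ≥ n'/3, then |A| < Σ_{A ∈ A} Σ_{i=|A|+1}^{k} C(k, i), where C(k,i) denotes the binomial coefficient. -/

import Mathlib

open Finset



lemma lemA : ∀ j, 23 ≤ j → 8 ^ (j + 1) < Nat.choose (4 * j + 2) j := by
  intro j hj
  induction j with
  | zero => omega
  | succ i ih =>
    rcases Nat.lt_or_ge i 23 with h | h
    · -- i + 1 = 23, i.e. i = 22? hj : 23 ≤ i+1 so i ≥ 22; with h : i < 23, i = 22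
      have : i = 22 := by omega
      subst this
      norm_num
      decide
    · have hI := ih h
      -- step: 8^(i+2) < C(4i+6, i+1)
      have h1 : (4*i+2+1) * Nat.choose (4*i+2) i = Nat.choose (4*i+3) (i+1) * (i+1) := by
        have := Nat.add_one_mul_choose_eq (4*i+2) i
        simpa [Nat.succ_eq_add_one] using this
      have h2 : Nat.choose (4*i+3) (i+1) * (4*i+4) = Nat.choose (4*i+4) (i+1) * (3*i+3) := by
        have := Nat.choose_mul_succ_eq (4*i+3) (i+1)
        have e : 4*i+3+1 - (i+1) = 3*i+3 := by omega
        rw [e] at this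
        convert this using 2 <;> omega
      have h3 : Nat.choose (4*i+4) (i+1) * (4*i+5) = Nat.choose (4*i+5) (i+1) * (3*i+4) := by
        have := Nat.choose_mul_succ_eq (4*i+4) (i+1)
        have e : 4*i+4+1 - (i+1) = 3*i+4 := by omega
        rw [e] at this
        convert this using 2 <;> omega
      have h4 : Nat.choose (4*i+5) (i+1) * (4*i+6) = Nat.choose (4*i+6) (i+1) * (3*i+5) := by
        have := Nat.choose_mul_succ_eq (4*i+5) (i+1)
        have e : 4*i+5+1 - (i+1) = 3*i+5 := by omega
        rw [e] at this
        convert this using 2 <;> omega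
      -- identity
      have key : Nat.choose (4*i+6) (i+1) * ((i+1)*(3*i+3)*(3*i+4)*(3*i+5))
          = Nat.choose (4*i+2) i * ((4*i+3)*(4*i+4)*(4*i+5)*(4*i+6)) := by
        calc Nat.choose (4*i+6) (i+1) * ((i+1)*(3*i+3)*(3*i+4)*(3*i+5))
            = (Nat.choose (4*i+6) (i+1) * (3*i+5)) * ((i+1)*(3*i+3)*(3*i+4)) := by ring
          _ = (Nat.choose (4*i+5) (i+1) * (4*i+6)) * ((i+1)*(3*i+3)*(3*i+4)) := by rw [h4]
          _ = (Nat.choose (4*i+5) (i+1) * (3*i+4)) * ((i+1)*(3*i+3)*(4*i+6)) := by ring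
          _ = (Nat.choose (4*i+4) (i+1) * (4*i+5)) * ((i+1)*(3*i+3)*(4*i+6)) := by rw [h3]
          _ = (Nat.choose (4*i+4) (i+1) * (3*i+3)) * ((i+1)*(4*i+5)*(4*i+6)) := by ring
          _ = (Nat.choose (4*i+3) (i+1) * (4*i+4)) * ((i+1)*(4*i+5)*(4*i+6)) := by rw [h2]
          _ = (Nat.choose (4*i+3) (i+1) * (i+1)) * ((4*i+4)*(4*i+5)*(4*i+6)) := by ring
          _ = ((4*i+2+1) * Nat.choose (4*i+2) i) * ((4*i+4)*(4*i+5)*(4*i+6)) := by rw [h1]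
          _ = Nat.choose (4*i+2) i * ((4*i+3)*(4*i+4)*(4*i+5)*(4*i+6)) := by ring
      have hD : 0 < (i+1)*(3*i+3)*(3*i+4)*(3*i+5) := by positivity
      have hfac : 8 * ((i+1)*(3*i+3)*(3*i+4)*(3*i+5)) ≤ (4*i+3)*(4*i+4)*(4*i+5)*(4*i+6) := by
        nlinarith [sq_nonneg i, h]
      have goal4 : 4 * (i+1) + 2 = 4*i+6 := by omega
      rw [goal4]
      -- 8^(i+2) * D < C(4i+6,i+1) * D
      have : 8 ^ (i+1+1) * ((i+1)*(3*i+3)*(3*i+4)*(3*i+5)) < Nat.choose (4*i+6) (i+1) * ((i+1)*(3*i+3)*(3*i+4)*(3*i+5)) := by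
        rw [key]
        calc 8 ^ (i+1+1) * ((i+1)*(3*i+3)*(3*i+4)*(3*i+5))
            = 8 ^ (i+1) * (8 * ((i+1)*(3*i+3)*(3*i+4)*(3*i+5))) := by ring
          _ < Nat.choose (4*i+2) i * (8 * ((i+1)*(3*i+3)*(3*i+4)*(3*i+5))) := by
              apply Nat.mul_lt_mul_of_lt_of_le hI (le_refl _)
              positivity
          _ ≤ Nat.choose (4*i+2) i * ((4*i+3)*(4*i+4)*(4*i+5)*(4*i+6)) :=
              Nat.mul_le_mul_left _ hfac
      exact Nat.lt_of_mul_lt_mul_right this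



lemma star' (n k : ℕ) (hn : 100 ≤ n) (hk : n ≤ 3 * k) :
    2 ^ n < ∑ t ∈ range k, (n + k).choose t := by
  set m := (n + 2) / 3 with hm
  have hmem : m - 1 ∈ range k := by simp only [mem_range]; omega
  calc 2 ^ n ≤ 8 ^ m := by
        calc 2 ^ n ≤ 2 ^ (3 * m) := Nat.pow_le_pow_right (by norm_num) (by omega)
          _ = 8 ^ m := by rw [pow_mul]; norm_num
    _ = 8 ^ ((m - 1) + 1) := by congr 1; omega
    _ < Nat.choose (4 * (m - 1) + 2) (m - 1) := lemA (m - 1) (by omega)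
    _ ≤ Nat.choose (n + k) (m - 1) := Nat.choose_le_choose _ (by omega)
    _ ≤ ∑ t ∈ range k, (n + k).choose t :=
        single_le_sum (f := fun t => (n + k).choose t) (fun i _ => Nat.zero_le _) hmem

-- triangular reindex
lemma tri (f : ℕ → ℕ → ℕ) : ∀ k : ℕ,
    ∑ t ∈ range k, ∑ j ∈ range (t + 1), f j (t - j)
      = ∑ j ∈ range k, ∑ s ∈ range (k - j), f j s := by
  intro k
  induction k with
  | zero => simp
  | succ k ih =>
    have h1 : ∀ j ∈ range k, ∑ s ∈ range (k + 1 - j), f j s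
        = ∑ s ∈ range (k - j), f j s + f j (k - j) := by
      intro j hj
      have : k + 1 - j = (k - j) + 1 := by simp at hj; omega
      rw [this, Finset.sum_range_succ]
    have h2 : ∑ j ∈ range (k+1), ∑ s ∈ range (k+1-j), f j s
        = (∑ j ∈ range k, (∑ s ∈ range (k-j), f j s + f j (k-j))) + f k 0 := by
      rw [Finset.sum_range_succ, Finset.sum_congr rfl h1]
      simp
    rw [Finset.sum_range_succ, ih, h2, Finset.sum_add_distrib, Finset.sum_range_succ]
    have : k - k = 0 := by omega
    rw [this, add_assoc]




lemma Wrange (k j : ℕ) :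
    ∑ s ∈ range (k - j), k.choose s = ∑ i ∈ Finset.Icc (j + 1) k, k.choose i := by
  apply Finset.sum_nbij' (i := fun s => k - s) (j := fun i => k - i)
  · intro a ha; simp only [mem_range] at ha; simp only [mem_Icc]; omega
  · intro a ha; simp only [mem_Icc] at ha; simp only [mem_range]; omega
  · intro a ha; simp only [mem_range] at ha; omega
  · intro a ha; simp only [mem_Icc] at ha; omega
  · intro a ha; simp only [mem_range] at ha
    rw [Nat.choose_symm (by omega)]

lemma vand (n k : ℕ) :
    ∑ j ∈ range k, n.choose j * (∑ i ∈ Finset.Icc (j + 1) k, k.choose i)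
      = ∑ t ∈ range k, (n + k).choose t := by
  have h1 : ∀ t, (n + k).choose t = ∑ j ∈ range (t + 1), n.choose j * k.choose (t - j) := by
    intro t
    rw [Nat.add_choose_eq]
    exact Finset.Nat.sum_antidiagonal_eq_sum_range_succ_mk _ _
  calc ∑ j ∈ range k, n.choose j * (∑ i ∈ Finset.Icc (j + 1) k, k.choose i)
      = ∑ j ∈ range k, ∑ s ∈ range (k - j), n.choose j * k.choose s := by
        apply Finset.sum_congr rfl; intro j _
        rw [← Wrange, Finset.mul_sum]
    _ = ∑ t ∈ range k, ∑ j ∈ range (t + 1), n.choose j * k.choose (t - j) :=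
        (tri (fun j s => n.choose j * k.choose s) k).symm
    _ = ∑ t ∈ range k, (n + k).choose t := by
        exact Finset.sum_congr rfl fun t _ => (h1 t).symm



lemma double_count (n' : ℕ) (𝓐 : Finset (Finset ℕ))
    (hsub : 𝓐 ⊆ (Finset.Icc 1 n').powerset)
    (hdc : ∀ A ∈ 𝓐, ∀ B : Finset ℕ, B ⊆ A → B ∈ 𝓐)
    (j m : ℕ) :
    (𝓐.filter (fun A => A.card = m)).card * m.choose j
      ≤ (𝓐.filter (fun A => A.card = j)).card * (n' - j).choose (m - j) := by
  classical
  set N := Finset.Icc 1 n' with hN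
  have hNcard : N.card = n' := by rw [hN, Nat.card_Icc]; omega
  apply Finset.card_mul_le_card_mul (r := fun B A => A ⊆ B)
  · -- lower bound on above-degree
    intro B hB
    simp only [mem_filter] at hB
    have : B.powersetCard j ⊆ (𝓐.filter (fun A => A.card = j)).bipartiteAbove (fun B A => A ⊆ B) B := by
      intro A hA
      rw [Finset.mem_powersetCard] at hA
      simp only [Finset.bipartiteAbove, mem_filter]
      exact ⟨⟨hdc B hB.1 A hA.1, hA.2⟩, hA.1⟩
    calc m.choose j = (B.powersetCard j).card := by rw [Finset.card_powersetCard, hB.2]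
      _ ≤ _ := Finset.card_le_card this
  · -- upper bound on below-degree
    intro A hA
    simp only [mem_filter] at hA
    have hAN : A ⊆ N := Finset.mem_powerset.mp (hsub hA.1)
    have : ((𝓐.filter (fun A => A.card = m)).bipartiteBelow (fun B A => A ⊆ B) A).card
        ≤ ((N \ A).powersetCard (m - j)).card := by
      apply Finset.card_le_card_of_injOn (fun B => B \ A)
      · intro B hB
        simp only [Finset.mem_coe, Finset.bipartiteBelow, mem_filter] at hB
        obtain ⟨⟨hB𝓐, hBm⟩, hAB⟩ := hB
        rw [Finset.mem_coe, Finset.mem_powersetCard]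
        constructor
        · exact Finset.sdiff_subset_sdiff (Finset.mem_powerset.mp (hsub hB𝓐)) (le_refl _)
        · rw [Finset.card_sdiff_of_subset hAB, hBm, hA.2]
      · intro B₁ h₁ B₂ h₂ he
        simp only [Finset.coe_filter, Set.mem_setOf_eq, Finset.bipartiteBelow, mem_filter] at h₁ h₂
        have e₁ : B₁ \ A ∪ A = B₁ := Finset.sdiff_union_of_subset h₁.2
        have e₂ : B₂ \ A ∪ A = B₂ := Finset.sdiff_union_of_subset h₂.2
        have he' : B₁ \ A = B₂ \ A := he
        rw [← e₁, ← e₂, he']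
    calc _ ≤ ((N \ A).powersetCard (m - j)).card := this
      _ = (n' - j).choose (m - j) := by
          rw [Finset.card_powersetCard, Finset.card_sdiff_of_subset hAN, hNcard, hA.2]




theorem downward_closed_shadow_sum :
    ∃ n₀ : ℕ, ∀ n' : ℕ, n₀ ≤ n' →
      ∀ 𝓐 : Finset (Finset ℕ), 𝓐 ⊆ (Finset.Icc 1 n').powerset → 𝓐.Nonempty →
        (∀ A ∈ 𝓐, ∀ B : Finset ℕ, B ⊆ A → B ∈ 𝓐) →
        ∀ k : ℕ, 0 < k → n' ≤ 3 * k →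
          𝓐.card < ∑ A ∈ 𝓐, ∑ i ∈ Finset.Icc (A.card + 1) k, Nat.choose k i := by
  classical
  refine ⟨100, ?_⟩
  intro n' hn 𝓐 hsub hne hdc k hk0 hk3
  set W : ℕ → ℕ := fun j => ∑ i ∈ Finset.Icc (j + 1) k, Nat.choose k i with hWdef
  show 𝓐.card < ∑ A ∈ 𝓐, W A.card
  obtain ⟨A₀, hA₀⟩ := hne
  have hempty : ∅ ∈ 𝓐 := hdc A₀ hA₀ ∅ (Finset.empty_subset _)
  have hcard_le : ∀ A ∈ 𝓐, A.card ≤ n' := by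
    intro A hA
    have := Finset.card_le_card (Finset.mem_powerset.mp (hsub hA))
    rwa [Nat.card_Icc, Nat.add_sub_cancel] at this
  have hk2 : 2 ≤ k := by omega
  have hW1 : ∀ j, j < k → 1 ≤ W j := by
    intro j hj
    have hk_mem : k ∈ Finset.Icc (j + 1) k := by simp [Finset.mem_Icc]; omega
    calc 1 = Nat.choose k k := (Nat.choose_self k).symm
      _ ≤ W j := Finset.single_le_sum (f := fun i => Nat.choose k i)
            (fun i _ => Nat.zero_le _) hk_mem
  have hW0 : ∀ j, k ≤ j → W j = 0 := by
    intro j hj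
    have : Finset.Icc (j + 1) k = ∅ := by
      rw [Finset.Icc_eq_empty_iff]; omega
    simp [hWdef, this]
  by_cases hbig : ∃ A ∈ 𝓐, k ≤ A.card
  swap
  · -- all sets have card < k
    push_neg at hbig
    have h1 : ∀ A ∈ 𝓐, 1 ≤ W A.card := fun A hA => hW1 _ (hbig A hA)
    have hstrict : 1 < W (Finset.card (∅ : Finset ℕ)) := by
      simp only [Finset.card_empty]
      have h1mem : 1 ∈ Finset.Icc (0 + 1) k := by simp [Finset.mem_Icc]; omega
      calc 1 < k := by omega
        _ = Nat.choose k 1 := (Nat.choose_one_right k).symm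
        _ ≤ W 0 := Finset.single_le_sum (f := fun i => Nat.choose k i)
            (fun i _ => Nat.zero_le _) h1mem
    rw [Finset.card_eq_sum_ones]
    exact Finset.sum_lt_sum h1 ⟨∅, hempty, hstrict⟩
  · obtain ⟨B, hB, hkB⟩ := hbig
    have hkn : k ≤ n' := le_trans hkB (hcard_le B hB)
    obtain ⟨S, hSB, hScard⟩ := Finset.exists_subset_card_eq hkB
    have hS𝓐 : S ∈ 𝓐 := hdc B hB S hSB
    set a : ℕ → ℕ := fun j => (𝓐.filter (fun A => A.card = j)).card with hadef
    have hak : 0 < a k := by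
      apply Finset.card_pos.mpr
      exact ⟨S, Finset.mem_filter.mpr ⟨hS𝓐, hScard⟩⟩
    set c : ℕ := n'.choose k with hcdef
    have hc : 0 < c := Nat.choose_pos hkn
    set R : Finset ℕ := Finset.range (n' + 1) with hRdef
    have hmaps : ∀ A ∈ 𝓐, A.card ∈ R := by
      intro A hA; rw [hRdef, Finset.mem_range]
      exact Nat.lt_succ_of_le (hcard_le A hA)
    -- fiberwise decompositions
    have hsplitW : ∑ A ∈ 𝓐, W A.card = ∑ j ∈ R, a j * W j := by
      rw [← Finset.sum_fiberwise_of_maps_to' hmaps W]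
      refine Finset.sum_congr rfl fun j _ => ?_
      rw [Finset.sum_const, smul_eq_mul]
    have hsplitC : 𝓐.card = ∑ j ∈ R, a j :=
      Finset.card_eq_sum_card_fiberwise hmaps
    -- double counting corollaries
    have hlow : ∀ j ∈ Finset.range k, a k * n'.choose j ≤ a j * c := by
      intro j hj
      rw [Finset.mem_range] at hj
      have hdcjk := double_count n' 𝓐 hsub hdc j k
      have hid : n'.choose k * Nat.choose k j = n'.choose j * (n' - j).choose (k - j) :=
        Nat.choose_mul (le_of_lt hj)
      have hpos : 0 < Nat.choose k j := Nat.choose_pos (le_of_lt hj)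
      have : (a k * n'.choose j) * Nat.choose k j ≤ (a j * c) * Nat.choose k j := by
        calc (a k * n'.choose j) * Nat.choose k j
            = n'.choose j * (a k * Nat.choose k j) := by ring
          _ ≤ n'.choose j * (a j * (n' - j).choose (k - j)) :=
              Nat.mul_le_mul_left _ hdcjk
          _ = a j * (n'.choose j * (n' - j).choose (k - j)) := by ring
          _ = a j * (n'.choose k * Nat.choose k j) := by rw [← hid]
          _ = (a j * c) * Nat.choose k j := by rw [hcdef]; ring
      exact Nat.le_of_mul_le_mul_right this hpos
    have hhigh : ∀ j ∈ R.filter (fun j => ¬ j < k), a j * c ≤ a k * n'.choose j := by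
      intro j hj
      rw [Finset.mem_filter, hRdef, Finset.mem_range] at hj
      have hjn : j ≤ n' := by omega
      have hkj : k ≤ j := by omega
      have hdcjk := double_count n' 𝓐 hsub hdc k j
      have hid : n'.choose j * Nat.choose j k = n'.choose k * (n' - k).choose (j - k) :=
        Nat.choose_mul hkj
      have hpos : 0 < Nat.choose j k := Nat.choose_pos hkj
      have : (a j * c) * Nat.choose j k ≤ (a k * n'.choose j) * Nat.choose j k := by
        calc (a j * c) * Nat.choose j k
            = c * (a j * Nat.choose j k) := by ring
          _ ≤ c * (a k * (n' - k).choose (j - k)) := Nat.mul_le_mul_left _ hdcjk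
          _ = a k * (n'.choose k * (n' - k).choose (j - k)) := by rw [hcdef]; ring
          _ = a k * (n'.choose j * Nat.choose j k) := by rw [← hid]
          _ = (a k * n'.choose j) * Nat.choose j k := by ring
      exact Nat.le_of_mul_le_mul_right this hpos
    -- the numeric core
    have hfil : R.filter (fun j => j < k) = Finset.range k := by
      ext x
      simp only [Finset.mem_filter, hRdef, Finset.mem_range]
      omega
    have hPQ : (∑ j ∈ Finset.range k, n'.choose j)
        + (∑ j ∈ R.filter (fun j => ¬ j < k), n'.choose j) = 2 ^ n' := by
      rw [← hfil, Finset.sum_filter_add_sum_filter_not, hRdef, Nat.sum_range_choose]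
    have hVQ : ∑ j ∈ Finset.range k, n'.choose j * W j
        = (∑ j ∈ Finset.range k, n'.choose j * (W j - 1))
          + ∑ j ∈ Finset.range k, n'.choose j := by
      rw [← Finset.sum_add_distrib]
      refine Finset.sum_congr rfl fun j hj => ?_
      rw [Finset.mem_range] at hj
      have := hW1 j hj
      have hw : W j = (W j - 1) + 1 := by omega
      calc n'.choose j * W j = n'.choose j * ((W j - 1) + 1) := by rw [← hw]
        _ = n'.choose j * (W j - 1) + n'.choose j := by ring
    have hstar : 2 ^ n' < ∑ j ∈ Finset.range k, n'.choose j * W j := by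
      rw [hWdef, vand n' k]
      exact star' n' k hn hk3
    have key : (∑ j ∈ R.filter (fun j => ¬ j < k), n'.choose j)
        < ∑ j ∈ Finset.range k, n'.choose j * (W j - 1) := by omega
    -- main chain
    have main : c * 𝓐.card < c * ∑ A ∈ 𝓐, W A.card := by
      calc c * 𝓐.card = ∑ j ∈ R, c * a j := by
            rw [hsplitC, Finset.mul_sum]
        _ = (∑ j ∈ Finset.range k, c * a j)
            + ∑ j ∈ R.filter (fun j => ¬ j < k), c * a j := by
            rw [← hfil, Finset.sum_filter_add_sum_filter_not]
        _ ≤ (∑ j ∈ Finset.range k, c * a j)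
            + a k * ∑ j ∈ R.filter (fun j => ¬ j < k), n'.choose j := by
            rw [Finset.mul_sum]
            refine Nat.add_le_add_left (Finset.sum_le_sum fun j hj => ?_) _
            calc c * a j = a j * c := by ring
              _ ≤ a k * n'.choose j := hhigh j hj
        _ < (∑ j ∈ Finset.range k, c * a j)
            + a k * ∑ j ∈ Finset.range k, n'.choose j * (W j - 1) :=
            Nat.add_lt_add_left ((Nat.mul_lt_mul_left hak).mpr key) _
        _ ≤ (∑ j ∈ Finset.range k, c * a j)
            + ∑ j ∈ Finset.range k, (a j * c) * (W j - 1) := by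
            rw [Finset.mul_sum]
            refine Nat.add_le_add_left (Finset.sum_le_sum fun j hj => ?_) _
            calc a k * (n'.choose j * (W j - 1)) = (a k * n'.choose j) * (W j - 1) := by ring
              _ ≤ (a j * c) * (W j - 1) := Nat.mul_le_mul_right _ (hlow j hj)
        _ = ∑ j ∈ Finset.range k, c * (a j * W j) := by
            rw [← Finset.sum_add_distrib]
            refine Finset.sum_congr rfl fun j hj => ?_
            rw [Finset.mem_range] at hj
            have := hW1 j hj
            have hw : W j = (W j - 1) + 1 := by omega
            calc c * a j + (a j * c) * (W j - 1)
                = c * (a j * ((W j - 1) + 1)) := by ring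
              _ = c * (a j * W j) := by rw [← hw]
        _ = ∑ j ∈ R, c * (a j * W j) := by
            rw [← Finset.sum_filter_add_sum_filter_not R (fun j => j < k), hfil]
            have : ∑ j ∈ R.filter (fun j => ¬ j < k), c * (a j * W j) = 0 := by
              refine Finset.sum_eq_zero fun j hj => ?_
              rw [Finset.mem_filter] at hj
              rw [hW0 j (by omega)]
              ring
            omega
        _ = c * ∑ A ∈ 𝓐, W A.card := by
            rw [hsplitW, Finset.mul_sum]
    exact Nat.lt_of_mul_lt_mul_left main
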